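/- Let G be a finite group acting on a commutative ring A, and let q be a prime ideal of A^G. Then the set of prime ideals of A lying over q is a single orbit under the action of G on Spec(A); in particular it is finite. -/

import Mathlib

/-- The subring `A^G` of `G`-invariant elements of `A`. -/
def fixedSubring (G A : Type*) [Group G] [CommRing A] [MulSemiringAction G A] : Subring A where
  carrier := {a | ∀ g : G, g • a = a}
  zero_mem' := by intro g; simp
  one_mem' := by intro g; simp
  add_mem' := by intro a b ha hb g; rw [smul_add, ha g, hb g]
  mul_mem' := by intro a b ha hb g; rw [smul_mul', ha g, hb g]
  neg_mem' := by intro a ha g; rw [smul_neg, ha g]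

section Aux

variable (G A : Type*) [Group G] [CommRing A] [MulSemiringAction G A]

theorem fixedSubring_isIntegral [Finite G] : Algebra.IsIntegral (fixedSubring G A) A := by
  cases nonempty_fintype G
  constructor
  intro x
  refine ⟨(prodXSubSMul G A x).toSubring (fixedSubring G A) ?_, ?_, ?_⟩
  · intro c hc g
    obtain ⟨n, _, hn⟩ := Polynomial.mem_coeffs_iff.1 hc
    exact hn.symm ▸ prodXSubSMul.coeff G A x g n
  · exact (Polynomial.monic_toSubring _ _ _).mpr (prodXSubSMul.monic G A x)
  · rw [Polynomial.eval₂_eq_eval_map,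
      show (algebraMap (fixedSubring G A) A) = (fixedSubring G A).subtype from rfl]
    erw [Polynomial.map_toSubring]
    exact prodXSubSMul.eval G A x

instance fixedSubring_smulCommClass : SMulCommClass G (fixedSubring G A) A := by
  constructor
  intro g r a
  show g • (↑r * a) = ↑r * (g • a)
  rw [smul_mul', r.2 g]

end Aux

open scoped Pointwise

/-- Let a finite group `G` act on a commutative ring `A` and let `q` be a prime
ideal of `A^G`.  Then there is a prime of `A` lying over `q`, any two primes of `A` lying over
`q` are in the same orbit of the action of `G` on `Spec A`, and the set of primes of `A` lying
over `q` is finite. -/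
theorem primes_over_fixed_prime_orbit (G A : Type*) [Group G] [Finite G] [CommRing A]
    [MulSemiringAction G A] (q : Ideal (fixedSubring G A)) (hq : q.IsPrime) :
    (∃ p : Ideal A, p.IsPrime ∧ p.comap (fixedSubring G A).subtype = q) ∧
      (∀ p₁ p₂ : Ideal A, p₁.IsPrime → p₂.IsPrime →
        p₁.comap (fixedSubring G A).subtype = q → p₂.comap (fixedSubring G A).subtype = q →
        ∃ g : G, p₁.map (MulSemiringAction.toRingHom G A g) = p₂) ∧
      {p : Ideal A | p.IsPrime ∧ p.comap (fixedSubring G A).subtype = q}.Finite := by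
  classical
  cases nonempty_fintype G
  haveI := fixedSubring_isIntegral G A
  haveI := hq
  have halg : algebraMap (fixedSubring G A) A = (fixedSubring G A).subtype := rfl
  -- Part 1: existence
  have h1 : ∃ p : Ideal A, p.IsPrime ∧ p.comap (fixedSubring G A).subtype = q := by
    obtain ⟨Q, -, hQp, hQ⟩ := Ideal.exists_ideal_over_prime_of_isIntegral q ⊥ (by
      intro x hx
      have : (x : A) = 0 := hx
      have hx0 : x = 0 := Subtype.ext this
      rw [hx0]; exact q.zero_mem)
    exact ⟨Q, hQp, hQ⟩
  -- comap is invariant under the action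
  have hcomap_smul : ∀ (g : G) (p : Ideal A),
      (g • p : Ideal A).comap (fixedSubring G A).subtype = p.comap (fixedSubring G A).subtype := by
    intro g p
    ext c
    simp only [Ideal.mem_comap, Subring.coe_subtype]
    rw [Ideal.mem_pointwise_smul_iff_inv_smul_mem, c.2 g⁻¹]
  -- Part 2: transitivity
  have h2 : ∀ p₁ p₂ : Ideal A, p₁.IsPrime → p₂.IsPrime →
      p₁.comap (fixedSubring G A).subtype = q → p₂.comap (fixedSubring G A).subtype = q →
      ∃ g : G, p₁.map (MulSemiringAction.toRingHom G A g) = p₂ := by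
    intro p₁ p₂ hp₁ hp₂ hc₁ hc₂
    haveI := hp₁; haveI := hp₂
    -- p₁ ⊆ ⋃ g, g • p₂
    have hsub : (p₁ : Set A) ⊆ ⋃ g ∈ (Finset.univ : Finset G), ((g • p₂ : Ideal A) : Set A) := by
      intro x hx
      -- the "norm" of x is invariant
      have hinv : ∀ h : G, h • (∏ g : G, g • x) = ∏ g : G, g • x := by
        intro h
        rw [Finset.smul_prod']
        exact Fintype.prod_equiv (Equiv.mulLeft h) _ _ (fun g => (mul_smul h g x).symm)
      set N : fixedSubring G A := ⟨∏ g : G, g • x, hinv⟩ with hN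
      have hNp₁ : (N : A) ∈ p₁ := by
        rw [show (N : A) = ∏ g : G, g • x from rfl,
          ← Finset.prod_erase_mul _ _ (Finset.mem_univ (1 : G))]
        exact Ideal.mul_mem_left _ _ (by simpa using hx)
      have hNq : N ∈ q := by rw [← hc₁]; exact hNp₁
      have hNp₂ : (N : A) ∈ p₂ := by rw [← hc₂] at hNq; exact hNq
      have : ∃ g ∈ (Finset.univ : Finset G), g • x ∈ p₂ := by
        rw [← Ideal.IsPrime.prod_mem_iff]
        exact hNp₂
      obtain ⟨g, -, hg⟩ := this
      refine Set.mem_biUnion (Finset.mem_coe.mpr (Finset.mem_univ g⁻¹)) ?_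
      rw [SetLike.mem_coe, Ideal.mem_inv_pointwise_smul_iff]
      exact hg
    have hprime : ∀ g ∈ (Finset.univ : Finset G), g ≠ 1 → g ≠ 1 →
        ((g • p₂ : Ideal A)).IsPrime := fun g _ _ _ => @Ideal.IsPrime.smul _ _ _ _ _ _ hp₂ g
    obtain ⟨g, -, hle⟩ := (Ideal.subset_union_prime (1 : G) (1 : G) hprime).mp (by
      simpa using hsub)
    -- p₁ = g • p₂ by incomparability
    have heq : p₁ = g • p₂ := by
      by_contra hne
      obtain ⟨x, hxJ, hxI⟩ := SetLike.exists_of_lt (lt_of_le_of_ne hle hne)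
      have hlt := Ideal.comap_lt_comap_of_integral_mem_sdiff
        (R := fixedSubring G A) hle ⟨hxJ, hxI⟩ (Algebra.IsIntegral.isIntegral x)
      rw [halg, hc₁, hcomap_smul, hc₂] at hlt
      exact lt_irrefl q hlt
    refine ⟨g⁻¹, ?_⟩
    rw [← Ideal.pointwise_smul_def, heq, inv_smul_smul]
  refine ⟨h1, h2, ?_⟩
  -- Part 3: finiteness
  obtain ⟨p₀, hp₀, hc₀⟩ := h1
  apply Set.Finite.subset (Set.finite_range
    (fun g : G => p₀.map (MulSemiringAction.toRingHom G A g)))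
  rintro p ⟨hp, hc⟩
  obtain ⟨g, hg⟩ := h2 p₀ p hp₀ hp hc₀ hc
  exact ⟨g, hg⟩
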